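/- With notation as in the α_a construction, the intersection of all finite supports of α_a equals the set {x ∈ {a} | ¬ (∀ n, α(n) = false)}, i.e., a belongs to every finite support of α_a if and only if ¬(∀ n, α(n) = false), and no element other than a belongs to every finite support. -/

import Mathlib

/-- The subgroup of finitary permutations of `𝔸`: permutations moving
only finitely many elements. -/
def FinPerm (𝔸 : Type*) : Subgroup (Equiv.Perm 𝔸) where
  carrier := {π : Equiv.Perm 𝔸 | {a | π a ≠ a}.Finite}
  one_mem' := by simp
  mul_mem' := by
    intro π σ hπ hσ
    refine (hπ.union hσ).subset ?_
    intro a ha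
    by_contra h
    simp only [Set.mem_union, Set.mem_setOf_eq, not_or, not_not] at h
    exact ha (by simp [Equiv.Perm.mul_apply, h.1, h.2])
  inv_mem' := by
    intro π hπ
    refine hπ.subset ?_
    intro a ha
    simp only [Set.mem_setOf_eq] at *
    intro h
    exact ha (by nth_rewrite 1 [← h]; first | exact π.symm_apply_apply a | simp [h])

/-- `A` supports `x`: every finitary permutation fixing `A` pointwise fixes `x`. -/
def NSupports (𝔸 : Type*) {X : Type*} [MulAction (FinPerm 𝔸) X] (A : Set 𝔸) (x : X) : Prop :=
  ∀ π : FinPerm 𝔸, (∀ a ∈ A, π.1 a = a) → π • x = x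

/-- `A` supports `f : ℕ → 𝔸 ⊕ Unit` under the conjugation action (which here is
postcomposition with the action on `𝔸 ⊕ Unit`, since `ℕ` carries the trivial action). -/
def FunSupports {𝔸 : Type*} (A : Set 𝔸) (f : ℕ → 𝔸 ⊕ Unit) : Prop :=
  ∀ π : FinPerm 𝔸, (∀ b ∈ A, π.1 b = b) → (fun n => Sum.map π.1 id (f n)) = f

theorem stmt_9 {𝔸 : Type*} [Infinite 𝔸] [DecidableEq 𝔸]
    (a : 𝔸) (α : ℕ → Bool)
    (αa : ℕ → 𝔸 ⊕ Unit)
    (hαa : ∀ n, αa n = if α n then Sum.inl a else Sum.inr ()) :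
    ⋂₀ {A : Set 𝔸 | A.Finite ∧ FunSupports A αa} =
      {x : 𝔸 | x = a ∧ ¬ ∀ n, α n = false} := by
  ext x
  simp only [Set.mem_sInter, Set.mem_setOf_eq]
  constructor
  · intro hx
    have hsupp : FunSupports {a} αa := by
      intro π hπ
      funext n
      rw [hαa n]
      by_cases h : α n
      · simp [h, hπ a rfl]
      · simp [h]
    have hxa : x = a := hx {a} ⟨Set.finite_singleton a, hsupp⟩
    refine ⟨hxa, ?_⟩
    intro hall
    have h0 : FunSupports (∅ : Set 𝔸) αa := by
      intro π hπ
      funext n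
      rw [hαa n, hall n]
      simp
    exact absurd (hx ∅ ⟨Set.finite_empty, h0⟩) (by simp)
  · rintro ⟨rfl, hne⟩ A ⟨hAfin, hAsupp⟩
    by_contra haA
    push_neg at hne
    obtain ⟨n, hn⟩ := hne
    have hn' : α n = true := by simpa using hn
    obtain ⟨b, hb⟩ := ((hAfin.insert x).infinite_compl).nonempty
    simp only [Set.mem_compl_iff, Set.mem_insert_iff, not_or] at hb
    have hswap : Equiv.swap x b ∈ FinPerm 𝔸 := by
      apply Set.Finite.subset (Set.Finite.insert x (Set.finite_singleton b))
      intro y hy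
      simp only [Set.mem_setOf_eq] at hy
      by_contra h
      simp only [Set.mem_insert_iff, Set.mem_singleton_iff, not_or] at h
      exact hy (Equiv.swap_apply_of_ne_of_ne h.1 h.2)
    have key := hAsupp ⟨Equiv.swap x b, hswap⟩ ?_
    · have h2 := congrFun key n
      rw [hαa n, hn'] at h2
      simp only [if_true, Sum.map_inl, Equiv.swap_apply_left, Sum.inl.injEq] at h2
      exact hb.1 h2
    · intro c hc
      exact Equiv.swap_apply_of_ne_of_ne (fun h => haA (h ▸ hc)) (fun h => hb.2 (h ▸ hc))
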